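/- Let {x_k} be a sequence of real-valued random variables, let m ≥ 1 be a positive integer, and for a fixed k ≥ m let the m-step prediction be x̂_k = f_k(x_0, …, x_{k−m}) for a measurable function f_k. Assume the prediction error x_k − x̂_k has a probability density function with compact support and all differential entropies below are well defined and finite. Then |supp(x_k − x̂_k)| ≥ 2^{h(x_k | x_0,…,x_{k−m})}, and equality holds if and only if x_k − x̂_k is uniformly distributed on its support and I(x_k − x̂_k; (x_0,…,x_{k−m})) = 0. -/

import Mathlib

open MeasureTheory Filter ProbabilityTheory

noncomputable section

/-- Differential entropy (base 2) of a random variable `X : Ω → E` under `P`,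
computed from the density of its distribution w.r.t. the reference (volume) measure. -/
def dEnt {Ω E : Type*} [MeasurableSpace Ω] [MeasureSpace E]
    (P : Measure Ω) (X : Ω → E) : ℝ :=
  -∫ t, ((P.map X).rnDeriv volume t).toReal * Real.logb 2 ((P.map X).rnDeriv volume t).toReal

/-- Conditional differential entropy `h(X | Y) = h(X, Y) - h(Y)`. -/
def condEnt {Ω E F : Type*} [MeasurableSpace Ω] [MeasureSpace E] [MeasureSpace F]
    (P : Measure Ω) (X : Ω → E) (Y : Ω → F) : ℝ :=
  dEnt P (fun ω => (X ω, Y ω)) - dEnt P Y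

/-- Mutual information `I(X; Y) = h(X) + h(Y) - h(X, Y)`. -/
def mutInfo {Ω E F : Type*} [MeasurableSpace Ω] [MeasureSpace E] [MeasureSpace F]
    (P : Measure Ω) (X : Ω → E) (Y : Ω → F) : ℝ :=
  dEnt P X + dEnt P Y - dEnt P (fun ω => (X ω, Y ω))

/-- Conditional mutual information `I(X; Y | Z) = h(X | Z) - h(X | Y, Z)`. -/
def condMutInfo {Ω E F G : Type*} [MeasurableSpace Ω] [MeasureSpace E] [MeasureSpace F]
    [MeasureSpace G] (P : Measure Ω) (X : Ω → E) (Y : Ω → F) (Z : Ω → G) : ℝ :=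
  condEnt P X Z - condEnt P X (fun ω => (Y ω, Z ω))

/-- The differential entropy of `X` is well defined (a density exists and the
entropy integral converges). -/
def entWellDef {Ω E : Type*} [MeasurableSpace Ω] [MeasureSpace E]
    (P : Measure Ω) (X : Ω → E) : Prop :=
  HasPDF X P volume ∧
    Integrable (fun t =>
      ((P.map X).rnDeriv volume t).toReal * Real.logb 2 ((P.map X).rnDeriv volume t).toReal)

/-- The (topological) support of the distribution of a real random variable. -/
def mSupp {Ω : Type*} [MeasurableSpace Ω] (P : Measure Ω) (X : Ω → ℝ) : Set ℝ :=
  {e | ∀ U ∈ nhds e, P.map X U ≠ 0}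

/-- The length (Lebesgue measure) of the support of the distribution of `X`. -/
def suppLen {Ω : Type*} [MeasurableSpace Ω] (P : Measure Ω) (X : Ω → ℝ) : ℝ :=
  (volume (mSupp P X)).toReal

/-- Maximum deviation of `X` from its mean, over the support of its distribution. -/
def Dmax {Ω : Type*} [MeasurableSpace Ω] (P : Measure Ω) (X : Ω → ℝ) : ℝ :=
  sSup ((fun e => |e - ∫ ω, X ω ∂P|) '' mSupp P X)

/-- `X` is uniformly distributed on the support of its distribution. -/
def UnifOnSupp {Ω : Type*} [MeasurableSpace Ω] (P : Measure Ω) (X : Ω → ℝ) : Prop :=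
  pdf.IsUniform X (mSupp P X) P

end


open scoped ENNReal

lemma my_gibbs {γ : Type*} [MeasurableSpace γ] {ν : Measure γ} [SigmaFinite ν]
    {p q : γ → ℝ≥0∞} (hpm : Measurable p) (_hqm : Measurable q)
    (hp1 : ∫⁻ t, p t ∂ν = 1) (hq1 : ∫⁻ t, q t ∂ν ≤ 1)
    (hpfin : ∀ᵐ t ∂ν, p t ≠ ∞) (hqfin : ∀ᵐ t ∂ν, q t ≠ ∞)
    (hsupp : ∀ᵐ t ∂ν, q t = 0 → p t = 0)
    (hpp : Integrable (fun t => (p t).toReal * Real.log (p t).toReal) ν)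
    (hpq : Integrable (fun t => (p t).toReal * Real.log (q t).toReal) ν)
    (hqm' : AEMeasurable q ν) :
    (∫ t, (p t).toReal * Real.log (q t).toReal ∂ν ≤
      ∫ t, (p t).toReal * Real.log (p t).toReal ∂ν) ∧
    (∫⁻ t, q t ∂ν = 1 →
      ∫ t, (p t).toReal * Real.log (q t).toReal ∂ν =
        ∫ t, (p t).toReal * Real.log (p t).toReal ∂ν →
      p =ᵐ[ν] q) := by
  have hPint : Integrable (fun t => (p t).toReal) ν :=
    integrable_toReal_of_lintegral_ne_top hpm.aemeasurable (by simp [hp1])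
  have hQint : Integrable (fun t => (q t).toReal) ν :=
    integrable_toReal_of_lintegral_ne_top hqm' (ne_top_of_le_ne_top ENNReal.one_ne_top hq1)
  set g : γ → ℝ := fun t => ((q t).toReal - (p t).toReal) -
      ((p t).toReal * Real.log (q t).toReal - (p t).toReal * Real.log (p t).toReal) with hg_def
  have hg_int : Integrable g ν := (hQint.sub hPint).sub (hpq.sub hpp)
  have hg_nonneg : ∀ᵐ t ∂ν, 0 ≤ g t := by
    filter_upwards [hpfin, hqfin, hsupp] with t h1 h2 h3
    by_cases hp0 : p t = 0
    · simp [hg_def, hp0, ENNReal.toReal_nonneg]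
    · have hq0 : q t ≠ 0 := fun h => hp0 (h3 h)
      have hP : 0 < (p t).toReal := ENNReal.toReal_pos hp0 h1
      have hQ : 0 < (q t).toReal := ENNReal.toReal_pos hq0 h2
      have key : Real.log ((q t).toReal / (p t).toReal) ≤ (q t).toReal / (p t).toReal - 1 :=
        Real.log_le_sub_one_of_pos (div_pos hQ hP)
      rw [Real.log_div hQ.ne' hP.ne'] at key
      have h4 : (p t).toReal * (Real.log (q t).toReal - Real.log (p t).toReal)
          ≤ (p t).toReal * ((q t).toReal / (p t).toReal - 1) :=
        mul_le_mul_of_nonneg_left key hP.le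
      have h5 : (p t).toReal * ((q t).toReal / (p t).toReal - 1)
          = (q t).toReal - (p t).toReal := by field_simp
      simp only [hg_def]
      nlinarith [h4, h5]
  have hintP : ∫ t, (p t).toReal ∂ν = 1 := by
    rw [integral_toReal hpm.aemeasurable (hpfin.mono fun t h => h.lt_top), hp1]; simp
  have hintQ : ∫ t, (q t).toReal ∂ν = (∫⁻ t, q t ∂ν).toReal := by
    rw [integral_toReal hqm' (hqfin.mono fun t h => h.lt_top)]
  have hgval : ∫ t, g t ∂ν = ((∫⁻ t, q t ∂ν).toReal - 1) -
      (∫ t, (p t).toReal * Real.log ((q t).toReal) ∂ν -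
        ∫ t, (p t).toReal * Real.log ((p t).toReal) ∂ν) := by
    have e1 : ∫ t, g t ∂ν = ∫ t, ((q t).toReal - (p t).toReal) ∂ν -
        ∫ t, ((p t).toReal * Real.log (q t).toReal - (p t).toReal * Real.log (p t).toReal) ∂ν :=
      integral_sub (hQint.sub hPint) (hpq.sub hpp)
    rw [e1, integral_sub hQint hPint, integral_sub hpq hpp, hintP, hintQ]
  have h0 : 0 ≤ ∫ t, g t ∂ν := integral_nonneg_of_ae hg_nonneg
  have hQle : (∫⁻ t, q t ∂ν).toReal ≤ 1 := by
    have := ENNReal.toReal_mono ENNReal.one_ne_top hq1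
    simpa using this
  constructor
  · rw [hgval] at h0; linarith
  · intro hq1' heq
    have hzero : ∫ t, g t ∂ν = 0 := by rw [hgval, hq1', heq]; simp
    have hgz : g =ᵐ[ν] 0 := (integral_eq_zero_iff_of_nonneg_ae hg_nonneg hg_int).mp hzero
    filter_upwards [hgz, hpfin, hqfin, hsupp] with t hg0 h1 h2 h3
    simp only [Pi.zero_apply] at hg0
    by_cases hp0 : p t = 0
    · have hq0 : (q t).toReal = 0 := by simp [hg_def, hp0] at hg0; linarith
      have : q t = 0 := by
        rcases (ENNReal.toReal_eq_zero_iff _).mp hq0 with h | h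
        · exact h
        · exact absurd h h2
      rw [hp0, this]
    · have hq0 : q t ≠ 0 := fun h => hp0 (h3 h)
      have hP : 0 < (p t).toReal := ENNReal.toReal_pos hp0 h1
      have hQ : 0 < (q t).toReal := ENNReal.toReal_pos hq0 h2
      by_contra hne
      have hne' : (q t).toReal / (p t).toReal ≠ 1 := by
        intro h
        exact hne ((ENNReal.toReal_eq_toReal_iff' h2 h1).mp (by field_simp at h; linarith)).symm
      have key : Real.log ((q t).toReal / (p t).toReal) < (q t).toReal / (p t).toReal - 1 :=
        Real.log_lt_sub_one_of_pos (div_pos hQ hP) hne'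
      rw [Real.log_div hQ.ne' hP.ne'] at key
      have h4 : (p t).toReal * (Real.log (q t).toReal - Real.log (p t).toReal)
          < (p t).toReal * ((q t).toReal / (p t).toReal - 1) :=
        (mul_lt_mul_iff_right₀ hP).mpr key
      have h5 : (p t).toReal * ((q t).toReal / (p t).toReal - 1)
          = (q t).toReal - (p t).toReal := by field_simp
      simp only [hg_def] at hg0
      nlinarith [h4, h5]



lemma mSupp_isClosed {Ω : Type*} [MeasurableSpace Ω] (P : Measure Ω) (X : Ω → ℝ) :
    IsClosed (mSupp P X) := by
  rw [← isOpen_compl_iff]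
  rw [isOpen_iff_mem_nhds]
  rintro a ha
  simp only [mSupp, Set.mem_compl_iff, Set.mem_setOf_eq, not_forall] at ha
  obtain ⟨U, hU, hU0⟩ := ha
  have : interior U ⊆ (mSupp P X)ᶜ := by
    intro b hb
    simp only [mSupp, Set.mem_compl_iff, Set.mem_setOf_eq, not_forall]
    exact ⟨U, mem_nhds_iff.mpr ⟨interior U, interior_subset, isOpen_interior, hb⟩, by simp [hU0]⟩
  exact Filter.mem_of_superset (interior_mem_nhds.mpr hU) this

lemma map_compl_mSupp_eq_zero {Ω : Type*} [MeasurableSpace Ω] (P : Measure Ω) (X : Ω → ℝ) :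
    P.map X (mSupp P X)ᶜ = 0 := by
  obtain ⟨B, hBc, -, hB⟩ := TopologicalSpace.exists_countable_basis ℝ
  set C := {U ∈ B | P.map X U = 0} with hC
  have hsub : (mSupp P X)ᶜ ⊆ ⋃₀ C := by
    intro a ha
    simp only [mSupp, Set.mem_compl_iff, Set.mem_setOf_eq, not_forall] at ha
    obtain ⟨U, hU, hU0⟩ := ha
    obtain ⟨t, htU, hta, hts⟩ := hB.mem_nhds_iff.mp hU
    refine ⟨t, ⟨htU, ?_⟩, hta⟩
    exact le_antisymm (by simpa [not_not.mp (by simpa using hU0) ▸ (measure_mono hts : P.map X t ≤ P.map X U)] using (measure_mono hts).trans_eq (not_not.mp (by simpa using hU0))) zero_le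
  refine measure_mono_null hsub ?_
  exact (measure_sUnion_null_iff (hBc.mono (Set.sep_subset _ _))).mpr fun s hs => hs.2



/-- the shear `(a, b) ↦ (a - f b, b)` as a measurable equivalence. -/
noncomputable def shearEquiv {β : Type*} [MeasurableSpace β] (f : β → ℝ) (hf : Measurable f) :
    (ℝ × β) ≃ᵐ (ℝ × β) where
  toFun := fun t => (t.1 - f t.2, t.2)
  invFun := fun t => (t.1 + f t.2, t.2)
  left_inv := fun t => by simp
  right_inv := fun t => by simp
  measurable_toFun := (measurable_fst.sub (hf.comp measurable_snd)).prodMk measurable_snd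
  measurable_invFun := (measurable_fst.add (hf.comp measurable_snd)).prodMk measurable_snd

lemma shear_measurePreserving {β : Type*} [MeasureSpace β] [SigmaFinite (volume : Measure β)]
    (f : β → ℝ) (hf : Measurable f) :
    MeasurePreserving (fun t : ℝ × β => (t.1 - f t.2, t.2)) volume volume := by
  rw [Measure.volume_eq_prod]
  have hskew : MeasurePreserving (fun t : β × ℝ => (t.1, t.2 - f t.1))
      ((volume : Measure β).prod volume) ((volume : Measure β).prod volume) := by
    have hgm : Measurable (Function.uncurry (fun (b : β) (a : ℝ) => a - f b)) :=
      measurable_snd.sub (hf.comp measurable_fst)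
    exact MeasurePreserving.skew_product (MeasurePreserving.id (volume : Measure β)) hgm
      (Filter.Eventually.of_forall fun b => (measurePreserving_sub_right volume (f b)).map_eq)
  have hswap1 : MeasurePreserving (Prod.swap : ℝ × β → β × ℝ)
      ((volume : Measure ℝ).prod volume) ((volume : Measure β).prod volume) :=
    Measure.measurePreserving_swap
  have hswap2 : MeasurePreserving (Prod.swap : β × ℝ → ℝ × β)
      ((volume : Measure β).prod volume) ((volume : Measure ℝ).prod volume) :=
    Measure.measurePreserving_swap
  have := (hswap2.comp hskew).comp hswap1
  convert this using 1
  all_goals rfl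

/-- entropy is invariant under a volume-preserving measurable equivalence. -/
lemma dEnt_comp_equiv {γ : Type*} [MeasureSpace γ] [SigmaFinite (volume : Measure γ)]
    {Ω : Type*} [MeasurableSpace Ω] (P : Measure Ω) (X : Ω → γ) (hX : Measurable X)
    (hpdf : HasPDF X P volume) (T : γ ≃ᵐ γ) (hT : MeasurePreserving T volume volume) :
    dEnt P (fun ω => T (X ω)) = dEnt P X := by
  have hac : P.map X ≪ volume := hpdf.absolutelyContinuous
  set p := (P.map X).rnDeriv volume with hp
  have hpm : Measurable p := Measure.measurable_rnDeriv _ _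
  have h1 : P.map (fun ω => T (X ω)) = (P.map X).map T := by
    rw [Measure.map_map T.measurable hX]; rfl
  have h2 : (P.map X).map T = volume.withDensity (p ∘ T.symm) := by
    conv_lhs => rw [← Measure.withDensity_rnDeriv_eq _ _ hac]
    ext s hs
    rw [Measure.map_apply T.measurable hs, withDensity_apply _ (T.measurable hs),
      withDensity_apply _ hs]
    have : ∀ x, p x = (p ∘ T.symm) (T x) := fun x => by simp
    calc ∫⁻ x in T ⁻¹' s, p x ∂volume = ∫⁻ x in T ⁻¹' s, (p ∘ T.symm) (T x) ∂volume := by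
          exact lintegral_congr fun x => by simp
      _ = ∫⁻ y in T '' (T ⁻¹' s), (p ∘ T.symm) y ∂volume :=
          hT.setLIntegral_comp_emb T.measurableEmbedding _ _
      _ = ∫⁻ y in s, (p ∘ T.symm) y ∂volume := by
          rw [Set.image_preimage_eq _ T.surjective]
  have h3 : (P.map (fun ω => T (X ω))).rnDeriv volume =ᵐ[volume] p ∘ T.symm := by
    rw [h1, h2]
    exact Measure.rnDeriv_withDensity volume (hpm.comp T.symm.measurable)
  have h4 : dEnt P (fun ω => T (X ω)) =
      -∫ t, ((p ∘ T.symm) t).toReal * Real.logb 2 (((p ∘ T.symm) t).toReal) := by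
    unfold dEnt
    congr 1
    refine integral_congr_ae ?_
    filter_upwards [h3] with t ht
    rw [ht]
  rw [h4]
  unfold dEnt
  congr 1
  exact (hT.symm T).integral_comp T.symm.measurableEmbedding
    (fun t => (p t).toReal * Real.logb 2 ((p t).toReal))





lemma mul_logb_eq (r : ℝ) : ∀ x : ℝ, x * Real.logb 2 r * Real.log 2 = x * Real.log r := by
  intro x
  rw [Real.logb]
  have h2 : Real.log 2 ≠ 0 := by
    have : (0:ℝ) < Real.log 2 := Real.log_pos (by norm_num)
    linarith
  field_simp

lemma entWellDef.integrable_log {Ω E : Type*} [MeasurableSpace Ω] [MeasureSpace E]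
    {P : Measure Ω} {X : Ω → E} (h : entWellDef P X) :
    Integrable (fun t => ((P.map X).rnDeriv volume t).toReal *
      Real.log (((P.map X).rnDeriv volume t).toReal)) := by
  have := h.2.mul_const (Real.log 2)
  refine this.congr (Filter.Eventually.of_forall fun t => ?_)
  exact mul_logb_eq _ _

lemma dEnt_eq_log {Ω E : Type*} [MeasurableSpace Ω] [MeasureSpace E]
    (P : Measure Ω) (X : Ω → E) :
    dEnt P X = -(∫ t, ((P.map X).rnDeriv volume t).toReal *
      Real.log (((P.map X).rnDeriv volume t).toReal)) / Real.log 2 := by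
  unfold dEnt
  rw [neg_div]
  congr 1
  rw [← integral_div]
  congr 1
  funext t
  rw [Real.logb, mul_div_assoc]

lemma transfer_int {γ δ : Type*} [MeasurableSpace γ] [MeasurableSpace δ]
    {ν : Measure γ} {ρ : Measure δ} (μ : Measure γ) [IsProbabilityMeasure μ]
    [SigmaFinite ν] [SigmaFinite ρ]
    (hac : μ ≪ ν) {π : γ → δ} (hπ : Measurable π) (hacπ : μ.map π ≪ ρ)
    {g : δ → ℝ} (hg : StronglyMeasurable g) :
    (Integrable (fun t => (μ.rnDeriv ν t).toReal * g (π t)) ν ↔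
      Integrable (fun s => ((μ.map π).rnDeriv ρ s).toReal * g s) ρ) ∧
    ∫ t, (μ.rnDeriv ν t).toReal * g (π t) ∂ν =
      ∫ s, ((μ.map π).rnDeriv ρ s).toReal * g s ∂ρ := by
  haveI : IsProbabilityMeasure (μ.map π) := Measure.isProbabilityMeasure_map hπ.aemeasurable
  have h1 : Integrable (fun t => (μ.rnDeriv ν t).toReal * g (π t)) ν ↔
      Integrable (fun t => g (π t)) μ := by
    simpa [smul_eq_mul] using integrable_rnDeriv_smul_iff (f := fun t => g (π t)) hac
  have h2 : Integrable (fun t => g (π t)) μ ↔ Integrable g (μ.map π) :=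
    (integrable_map_measure hg.aestronglyMeasurable.aemeasurable.aestronglyMeasurable hπ.aemeasurable).symm
  have h3 : Integrable g (μ.map π) ↔
      Integrable (fun s => ((μ.map π).rnDeriv ρ s).toReal * g s) ρ := by
    simpa [smul_eq_mul] using (integrable_rnDeriv_smul_iff (f := g) hacπ).symm
  refine ⟨h1.trans (h2.trans h3), ?_⟩
  calc ∫ t, (μ.rnDeriv ν t).toReal * g (π t) ∂ν = ∫ t, g (π t) ∂μ := by
        simpa [smul_eq_mul] using integral_rnDeriv_smul (f := fun t => g (π t)) hac
    _ = ∫ s, g s ∂(μ.map π) :=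
        (integral_map hπ.aemeasurable
          hg.aestronglyMeasurable.aemeasurable.aestronglyMeasurable).symm
    _ = ∫ s, ((μ.map π).rnDeriv ρ s).toReal * g s ∂ρ := by
        simpa [smul_eq_mul] using (integral_rnDeriv_smul (f := g) hacπ).symm


lemma maxEnt {Ω : Type*} [MeasurableSpace Ω] (P : Measure Ω) [IsProbabilityMeasure P]
    (e : Ω → ℝ) (he : Measurable e) (hpdf : HasPDF e P volume)
    (hcpt : IsCompact (mSupp P e)) (hwd : entWellDef P e) :
    0 < suppLen P e ∧ dEnt P e ≤ Real.logb 2 (suppLen P e) ∧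
      (dEnt P e = Real.logb 2 (suppLen P e) ↔ UnifOnSupp P e) := by
  have hlog2 : (0:ℝ) < Real.log 2 := Real.log_pos (by norm_num)
  set S := mSupp P e with hS_def
  have hSm : MeasurableSet S := (mSupp_isClosed P e).measurableSet
  haveI : IsProbabilityMeasure (P.map e) := Measure.isProbabilityMeasure_map he.aemeasurable
  have hac : P.map e ≪ volume := hpdf.absolutelyContinuous
  have hcompl : P.map e Sᶜ = 0 := map_compl_mSupp_eq_zero P e
  have hmapS : P.map e S = 1 := by
    have h := measure_add_measure_compl (μ := P.map e) hSm
    simpa [hcompl] using h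
  have hLfin : volume S ≠ ∞ := hcpt.measure_lt_top.ne
  have hL0 : volume S ≠ 0 := by
    intro h
    have h2 : P.map e S = 0 := hac h
    rw [hmapS] at h2; exact one_ne_zero h2
  set L : ℝ := (volume S).toReal with hL_def
  have hLpos : 0 < L := ENNReal.toReal_pos hL0 hLfin
  have hsuppLen : suppLen P e = L := rfl
  set p := (P.map e).rnDeriv volume with hp_def
  have hpm : Measurable p := Measure.measurable_rnDeriv _ _
  set q : ℝ → ℝ≥0∞ := S.indicator (fun _ => (volume S)⁻¹) with hq_def
  have hqm : Measurable q := measurable_const.indicator hSm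
  have hp1 : ∫⁻ t, p t = 1 := by rw [Measure.lintegral_rnDeriv hac]; simp
  have hq1 : ∫⁻ t, q t = 1 := by
    rw [hq_def, lintegral_indicator hSm]
    simp only [lintegral_const, Measure.restrict_apply_univ]
    exact ENNReal.inv_mul_cancel hL0 hLfin
  have hpfin : ∀ᵐ t, p t ≠ ∞ := (Measure.rnDeriv_lt_top _ _).mono fun t h => h.ne
  have hqinv_ne_top : (volume S)⁻¹ ≠ ∞ := ENNReal.inv_ne_top.mpr hL0
  have hqinv_ne_zero : (volume S)⁻¹ ≠ 0 := ENNReal.inv_ne_zero.mpr hLfin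
  have hqfin : ∀ᵐ t, q t ≠ ∞ := Filter.Eventually.of_forall fun t => by
    by_cases h : t ∈ S <;> simp [hq_def, h, hqinv_ne_top]
  have hp_zero_off : ∀ᵐ t, t ∈ Sᶜ → p t = 0 := by
    have h0 : ∫⁻ t in Sᶜ, p t = 0 := by
      rw [hp_def, Measure.setLIntegral_rnDeriv hac]; exact hcompl
    exact (setLIntegral_eq_zero_iff hSm.compl hpm).mp h0
  have hsupp : ∀ᵐ t, q t = 0 → p t = 0 := by
    filter_upwards [hp_zero_off] with t ht hq0
    apply ht
    intro hmem
    rw [hq_def] at hq0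
    rw [Set.indicator_of_mem hmem] at hq0
    exact hqinv_ne_zero hq0
  have hpp : Integrable (fun t => (p t).toReal * Real.log ((p t).toReal)) := hwd.integrable_log
  have hqtoReal : ∀ t ∈ S, (q t).toReal = L⁻¹ := fun t ht => by
    rw [hq_def, Set.indicator_of_mem ht, ENNReal.toReal_inv]
  have plogq_eq : ∀ t, (p t).toReal * Real.log ((q t).toReal)
      = S.indicator (fun s => (p s).toReal) t * (-Real.log L) := by
    intro t
    by_cases h : t ∈ S
    · rw [hqtoReal t h, Set.indicator_of_mem h, Real.log_inv]
    · rw [hq_def, Set.indicator_of_notMem h, Set.indicator_of_notMem h]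
      simp
  have hPint : Integrable (fun t => (p t).toReal) :=
    integrable_toReal_of_lintegral_ne_top hpm.aemeasurable (by simp [hp1])
  have hpq : Integrable (fun t => (p t).toReal * Real.log ((q t).toReal)) := by
    have : Integrable (fun t => S.indicator (fun s => (p s).toReal) t * (-Real.log L)) :=
      (hPint.indicator hSm).mul_const _
    exact this.congr (Filter.Eventually.of_forall fun t => (plogq_eq t).symm)
  have hintS : ∫ t, S.indicator (fun s => (p s).toReal) t = 1 := by
    rw [integral_indicator hSm]
    have h1 : ∫ t in S, (p t).toReal = (∫⁻ t in S, p t).toReal := by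
      refine integral_toReal (hpm.aemeasurable.restrict) ?_
      exact ae_restrict_of_ae (hpfin.mono fun t h => h.lt_top)
    rw [h1, hp_def, Measure.setLIntegral_rnDeriv hac, hmapS, ENNReal.toReal_one]
  have hpq_val : ∫ t, (p t).toReal * Real.log ((q t).toReal) = -Real.log L := by
    calc ∫ t, (p t).toReal * Real.log ((q t).toReal)
        = ∫ t, S.indicator (fun s => (p s).toReal) t * (-Real.log L) :=
          integral_congr_ae (Filter.Eventually.of_forall plogq_eq)
      _ = (∫ t, S.indicator (fun s => (p s).toReal) t) * (-Real.log L) :=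
          integral_mul_const _ _
      _ = -Real.log L := by rw [hintS, one_mul]
  have hgibbs := my_gibbs hpm hqm hp1 (le_of_eq hq1) hpfin hqfin hsupp hpp hpq hqm.aemeasurable
  have hJ_ge : -Real.log L ≤ ∫ t, (p t).toReal * Real.log ((p t).toReal) := by
    rw [← hpq_val]; exact hgibbs.1
  have hlogb : Real.logb 2 L = Real.log L / Real.log 2 := by rw [Real.logb]
  refine ⟨hsuppLen ▸ hLpos, ?_, ?_⟩
  · rw [hsuppLen, dEnt_eq_log, hlogb]
    rw [div_le_div_iff_of_pos_right hlog2]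
    linarith
  · rw [hsuppLen, dEnt_eq_log, hlogb]
    have hiff : -(∫ t, (p t).toReal * Real.log ((p t).toReal)) / Real.log 2
        = Real.log L / Real.log 2 ↔
        ∫ t, (p t).toReal * Real.log ((q t).toReal)
          = ∫ t, (p t).toReal * Real.log ((p t).toReal) := by
      rw [div_eq_div_iff (by positivity) (by positivity)]
      constructor
      · intro h
        have h' : -(∫ t, (p t).toReal * Real.log ((p t).toReal)) = Real.log L := by
          nlinarith [hlog2]
        rw [hpq_val]; linarith
      · intro h
        have h2 : ∫ t, (p t).toReal * Real.log ((p t).toReal) = -Real.log L := by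
          rw [← h, hpq_val]
        rw [h2]; ring
    rw [hiff]
    constructor
    · intro heq
      have hpq_ae : p =ᵐ[volume] q := hgibbs.2 hq1 heq
      have hmap : P.map e = ProbabilityTheory.cond volume S := by
        calc P.map e = volume.withDensity p := (Measure.withDensity_rnDeriv_eq _ _ hac).symm
          _ = volume.withDensity q := withDensity_congr_ae hpq_ae
          _ = (volume.restrict S).withDensity (fun _ => (volume S)⁻¹) := by
              rw [hq_def, withDensity_indicator hSm]
          _ = (volume S)⁻¹ • volume.restrict S := withDensity_const _
          _ = ProbabilityTheory.cond volume S := rfl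
      exact hmap
    · intro hunif
      have hmap : P.map e = volume.withDensity q := by
        calc P.map e = ProbabilityTheory.cond volume S := hunif
          _ = (volume S)⁻¹ • volume.restrict S := rfl
          _ = (volume.restrict S).withDensity (fun _ => (volume S)⁻¹) :=
              (withDensity_const _).symm
          _ = volume.withDensity q := by rw [hq_def, withDensity_indicator hSm]
      have hpq_ae : p =ᵐ[volume] q := by
        rw [hp_def, hmap]
        exact Measure.rnDeriv_withDensity volume hqm
      have h1 : ∫ t, (p t).toReal * Real.log ((p t).toReal)
          = ∫ t, (q t).toReal * Real.log ((q t).toReal) := by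
        refine integral_congr_ae ?_
        filter_upwards [hpq_ae] with t ht
        rw [ht]
      have h2 : ∫ t, (p t).toReal * Real.log ((q t).toReal)
          = ∫ t, (q t).toReal * Real.log ((q t).toReal) := by
        refine integral_congr_ae ?_
        filter_upwards [hpq_ae] with t ht
        rw [ht]
      rw [h1, h2]


lemma mutInfo_nonneg' {Ω α β : Type*} [MeasurableSpace Ω] [MeasureSpace α] [MeasureSpace β]
    [SigmaFinite (volume : Measure α)] [SigmaFinite (volume : Measure β)]
    (P : Measure Ω) [IsProbabilityMeasure P] {X : Ω → α} {Y : Ω → β}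
    (hX : Measurable X) (hY : Measurable Y)
    (hJ : entWellDef P (fun ω => (X ω, Y ω))) (hXw : entWellDef P X) (hYw : entWellDef P Y) :
    0 ≤ mutInfo P X Y := by
  have hlog2 : (0:ℝ) < Real.log 2 := Real.log_pos (by norm_num)
  have hvol : (volume : Measure (α × β)) = (volume : Measure α).prod volume :=
    Measure.volume_eq_prod α β
  haveI : SigmaFinite (volume : Measure (α × β)) := by rw [hvol]; infer_instance
  have hXY : Measurable (fun ω => (X ω, Y ω)) := hX.prodMk hY
  haveI : IsProbabilityMeasure (P.map (fun ω => (X ω, Y ω))) :=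
    Measure.isProbabilityMeasure_map hXY.aemeasurable
  haveI : IsProbabilityMeasure (P.map X) := Measure.isProbabilityMeasure_map hX.aemeasurable
  haveI : IsProbabilityMeasure (P.map Y) := Measure.isProbabilityMeasure_map hY.aemeasurable
  have hacJ : P.map (fun ω => (X ω, Y ω)) ≪ volume := hJ.1.absolutelyContinuous
  have hacX : P.map X ≪ volume := hXw.1.absolutelyContinuous
  have hacY : P.map Y ≪ volume := hYw.1.absolutelyContinuous
  set p := (P.map (fun ω => (X ω, Y ω))).rnDeriv volume with hp_def
  set ρX := (P.map X).rnDeriv volume with hρX_def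
  set ρY := (P.map Y).rnDeriv volume with hρY_def
  have hpm : Measurable p := Measure.measurable_rnDeriv _ _
  have hXm : Measurable ρX := Measure.measurable_rnDeriv _ _
  have hYm : Measurable ρY := Measure.measurable_rnDeriv _ _
  set q : α × β → ℝ≥0∞ := fun t => ρX t.1 * ρY t.2 with hq_def
  have hqm : Measurable q := (hXm.comp measurable_fst).mul (hYm.comp measurable_snd)
  have hp1 : ∫⁻ t, p t = 1 := by rw [hp_def, Measure.lintegral_rnDeriv hacJ]; simp
  have hq1 : ∫⁻ t, q t = 1 := by
    rw [hq_def, hvol, lintegral_prod_mul hXm.aemeasurable hYm.aemeasurable,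
      Measure.lintegral_rnDeriv hacX, Measure.lintegral_rnDeriv hacY]
    simp
  have hpfin : ∀ᵐ t : α × β, p t ≠ ∞ := (Measure.rnDeriv_lt_top _ _).mono fun t h => h.ne
  have hXnull : (volume : Measure α) {a : α | ρX a = ∞} = 0 := by
    have h := Measure.rnDeriv_lt_top (P.map X) volume
    rw [ae_iff] at h
    simpa [lt_top_iff_ne_top] using h
  have hYnull : (volume : Measure β) {b : β | ρY b = ∞} = 0 := by
    have h := Measure.rnDeriv_lt_top (P.map Y) volume
    rw [ae_iff] at h
    simpa [lt_top_iff_ne_top] using h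
  have haX : ∀ᵐ t : α × β, ρX t.1 ≠ ∞ := by
    rw [ae_iff]
    refine measure_mono_null (fun t ht => ?_) (show (volume : Measure (α × β))
      ({a : α | ρX a = ∞} ×ˢ (Set.univ : Set β)) = 0 from ?_)
    · simp only [Set.mem_setOf_eq, not_not] at ht
      exact ⟨ht, trivial⟩
    · rw [hvol, Measure.prod_prod, hXnull, zero_mul]
  have haY : ∀ᵐ t : α × β, ρY t.2 ≠ ∞ := by
    rw [ae_iff]
    refine measure_mono_null (fun t ht => ?_) (show (volume : Measure (α × β))
      ((Set.univ : Set α) ×ˢ {b : β | ρY b = ∞}) = 0 from ?_)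
    · simp only [Set.mem_setOf_eq, not_not] at ht
      exact ⟨trivial, ht⟩
    · rw [hvol, Measure.prod_prod, hYnull, mul_zero]
  have hqfin : ∀ᵐ t : α × β, q t ≠ ∞ := by
    filter_upwards [haX, haY] with t h1 h2
    exact ENNReal.mul_ne_top h1 h2
  have hAm : MeasurableSet {a : α | ρX a = 0} := hXm (measurableSet_singleton 0)
  have hBm : MeasurableSet {b : β | ρY b = 0} := hYm (measurableSet_singleton 0)
  have hmargA : ∀ᵐ t : α × β, ρX t.1 = 0 → p t = 0 := by
    have h0 : ∫⁻ t in {a : α | ρX a = 0} ×ˢ (Set.univ : Set β), p t = 0 := by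
      rw [hp_def, Measure.setLIntegral_rnDeriv hacJ]
      have h1 : (P.map (fun ω => (X ω, Y ω))) ({a : α | ρX a = 0} ×ˢ (Set.univ : Set β))
          = (P.map X) {a : α | ρX a = 0} := by
        rw [Measure.map_apply hXY (hAm.prod MeasurableSet.univ), Measure.map_apply hX hAm]
        congr 1
        ext ω; simp
      rw [h1, ← Measure.setLIntegral_rnDeriv hacX]
      rw [setLIntegral_congr_fun hAm (fun a ha => ha)]
      simp
    have h2 := (setLIntegral_eq_zero_iff (hAm.prod MeasurableSet.univ) hpm).mp h0
    filter_upwards [h2] with t ht h1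
    exact ht ⟨h1, trivial⟩
  have hmargB : ∀ᵐ t : α × β, ρY t.2 = 0 → p t = 0 := by
    have h0 : ∫⁻ t in (Set.univ : Set α) ×ˢ {b : β | ρY b = 0}, p t = 0 := by
      rw [hp_def, Measure.setLIntegral_rnDeriv hacJ]
      have h1 : (P.map (fun ω => (X ω, Y ω))) ((Set.univ : Set α) ×ˢ {b : β | ρY b = 0})
          = (P.map Y) {b : β | ρY b = 0} := by
        rw [Measure.map_apply hXY (MeasurableSet.univ.prod hBm), Measure.map_apply hY hBm]
        congr 1
        ext ω; simp
      rw [h1, ← Measure.setLIntegral_rnDeriv hacY]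
      rw [setLIntegral_congr_fun hBm (fun b hb => hb)]
      simp
    have h2 := (setLIntegral_eq_zero_iff (MeasurableSet.univ.prod hBm) hpm).mp h0
    filter_upwards [h2] with t ht h1
    exact ht ⟨trivial, h1⟩
  have hsupp : ∀ᵐ t : α × β, q t = 0 → p t = 0 := by
    filter_upwards [hmargA, hmargB] with t h1 h2 hq0
    rcases mul_eq_zero.mp hq0 with h | h
    · exact h1 h
    · exact h2 h
  have hpp : Integrable (fun t => (p t).toReal * Real.log ((p t).toReal)) volume :=
    hJ.integrable_log
  have hsplit : (fun t : α × β => (p t).toReal * Real.log ((q t).toReal)) =ᵐ[volume]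
      (fun t => (p t).toReal * Real.log ((ρX t.1).toReal)
        + (p t).toReal * Real.log ((ρY t.2).toReal)) := by
    filter_upwards [hsupp, haX, haY] with t h0 h1 h2
    by_cases hp0 : p t = 0
    · simp [hp0]
    · have hq0 : q t ≠ 0 := fun h => hp0 (h0 h)
      rw [hq_def] at hq0
      have hx0 : ρX t.1 ≠ 0 := fun h => hq0 (by simp [h])
      have hy0 : ρY t.2 ≠ 0 := fun h => hq0 (by simp [h])
      have : (q t).toReal = (ρX t.1).toReal * (ρY t.2).toReal := by
        rw [hq_def]; exact ENNReal.toReal_mul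
      rw [this, Real.log_mul (ENNReal.toReal_pos hx0 h1).ne' (ENNReal.toReal_pos hy0 h2).ne']
      ring
  have hmapfst : (P.map (fun ω => (X ω, Y ω))).map Prod.fst = P.map X := by
    rw [Measure.map_map measurable_fst hXY]; rfl
  have hmapsnd : (P.map (fun ω => (X ω, Y ω))).map Prod.snd = P.map Y := by
    rw [Measure.map_map measurable_snd hXY]; rfl
  have hgX : StronglyMeasurable (fun a : α => Real.log ((ρX a).toReal)) :=
    (Real.measurable_log.comp hXm.ennreal_toReal).stronglyMeasurable
  have hgY : StronglyMeasurable (fun b : β => Real.log ((ρY b).toReal)) :=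
    (Real.measurable_log.comp hYm.ennreal_toReal).stronglyMeasurable
  have htX := transfer_int (ν := (volume : Measure (α × β))) (ρ := (volume : Measure α))
    (P.map (fun ω => (X ω, Y ω))) hacJ measurable_fst
    (by rw [hmapfst]; exact hacX) hgX
  rw [hmapfst] at htX
  have htY := transfer_int (ν := (volume : Measure (α × β))) (ρ := (volume : Measure β))
    (P.map (fun ω => (X ω, Y ω))) hacJ measurable_snd
    (by rw [hmapsnd]; exact hacY) hgY
  rw [hmapsnd] at htY
  have hIntX : Integrable (fun t : α × β => (p t).toReal * Real.log ((ρX t.1).toReal)) volume :=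
    htX.1.mpr hXw.integrable_log
  have hIntY : Integrable (fun t : α × β => (p t).toReal * Real.log ((ρY t.2).toReal)) volume :=
    htY.1.mpr hYw.integrable_log
  have hpq : Integrable (fun t : α × β => (p t).toReal * Real.log ((q t).toReal)) volume :=
    (hIntX.add hIntY).congr hsplit.symm
  have hvalX : ∫ t : α × β, (p t).toReal * Real.log ((ρX t.1).toReal)
      = ∫ a, (ρX a).toReal * Real.log ((ρX a).toReal) := htX.2
  have hvalY : ∫ t : α × β, (p t).toReal * Real.log ((ρY t.2).toReal)
      = ∫ b, (ρY b).toReal * Real.log ((ρY b).toReal) := htY.2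
  have hsum : ∫ t : α × β, (p t).toReal * Real.log ((q t).toReal)
      = (∫ a, (ρX a).toReal * Real.log ((ρX a).toReal))
        + ∫ b, (ρY b).toReal * Real.log ((ρY b).toReal) := by
    rw [integral_congr_ae hsplit, integral_add hIntX hIntY, hvalX, hvalY]
  have hgibbs := my_gibbs hpm hqm hp1 (le_of_eq hq1) hpfin hqfin hsupp hpp hpq hqm.aemeasurable
  have hkey : (∫ a, (ρX a).toReal * Real.log ((ρX a).toReal))
        + (∫ b, (ρY b).toReal * Real.log ((ρY b).toReal))
      ≤ ∫ t : α × β, (p t).toReal * Real.log ((p t).toReal) := by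
    rw [← hsum]; exact hgibbs.1
  rw [mutInfo, dEnt_eq_log, dEnt_eq_log, dEnt_eq_log]
  rw [← add_div, div_sub_div_same]
  apply div_nonneg _ hlog2.le
  simp only [← hρX_def, ← hρY_def, ← hp_def]
  linarith

/-- Theorem 4 of the paper: support-length bound for `m`-step
prediction, `|supp(x_k - x̂_k)| ≥ 2^{h(x_k | x_0,…,x_{k-m})}`, with equality iff the
prediction error is uniform and has zero mutual information with `x_0,…,x_{k-m}`. -/
theorem support_length_m_step_prediction_bound
    {Ω : Type*} [MeasurableSpace Ω] (P : Measure Ω) [IsProbabilityMeasure P]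
    (x : ℕ → Ω → ℝ) (hx : ∀ i, Measurable (x i))
    (m : ℕ) (hm : 1 ≤ m) (k : ℕ) (hk : m ≤ k)
    (f : (Fin (k - m + 1) → ℝ) → ℝ) (hf : Measurable f)
    (past : Ω → Fin (k - m + 1) → ℝ) (hpast : past = fun ω i => x i.1 ω)
    (e : Ω → ℝ) (he : e = fun ω => x k ω - f (past ω))
    -- the prediction error has a density with compact support
    (hpdf : HasPDF e P volume) (hcpt : IsCompact (mSupp P e))
    -- all differential entropies involved are well defined and finite
    (h₁ : entWellDef P e) (h₂ : entWellDef P past)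
    (h₃ : entWellDef P (fun ω => (x k ω, past ω)))
    (h₄ : entWellDef P (fun ω => (e ω, past ω))) :
    suppLen P e ≥ (2 : ℝ) ^ condEnt P (x k) past ∧
      (suppLen P e = (2 : ℝ) ^ condEnt P (x k) past ↔
        UnifOnSupp P e ∧ mutInfo P e past = 0) := by
  have hlog2 : (0:ℝ) < Real.log 2 := Real.log_pos (by norm_num)
  have hpast_m : Measurable past := by
    rw [hpast]; exact measurable_pi_lambda _ (fun i => hx i.1)
  have he_m : Measurable e := by
    rw [he]; exact (hx k).sub (hf.comp hpast_m)
  -- shear invariance: h(x_k, past) = h(e, past)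
  set T := shearEquiv f hf with hT_def
  have hT : MeasurePreserving (⇑T) volume volume := shear_measurePreserving f hf
  have hXY : Measurable (fun ω => (x k ω, past ω)) := (hx k).prodMk hpast_m
  have hshear := dEnt_comp_equiv P (fun ω => (x k ω, past ω)) hXY h₃.1 T hT
  have hTeq : (fun ω => T ((x k ω, past ω))) = fun ω => (e ω, past ω) := by
    funext ω
    rw [he]
    rfl
  rw [hTeq] at hshear
  -- condEnt P (x k) past = dEnt P e - mutInfo P e past
  have key1 : condEnt P (x k) past = dEnt P e - mutInfo P e past := by
    unfold condEnt mutInfo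
    rw [← hshear]
    ring
  have hM : 0 ≤ mutInfo P e past := mutInfo_nonneg' P he_m hpast_m h₄ h₁ h₂
  obtain ⟨hLpos, hle, hiff⟩ := maxEnt P e he_m hpdf hcpt h₁
  have hcle : condEnt P (x k) past ≤ dEnt P e := by rw [key1]; linarith
  have h2dE : (2:ℝ) ^ dEnt P e ≤ suppLen P e := by
    calc (2:ℝ) ^ dEnt P e ≤ 2 ^ Real.logb 2 (suppLen P e) :=
          (Real.rpow_le_rpow_left_iff one_lt_two).mpr hle
      _ = suppLen P e := Real.rpow_logb (by norm_num) (by norm_num) hLpos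
  have h2c : (2:ℝ) ^ condEnt P (x k) past ≤ suppLen P e :=
    le_trans ((Real.rpow_le_rpow_left_iff one_lt_two).mpr hcle) h2dE
  refine ⟨h2c, ?_, ?_⟩
  · intro hLeq
    -- equality forces dEnt P e = condEnt and dEnt P e = logb 2 L
    have h1 : (2:ℝ) ^ dEnt P e ≤ (2:ℝ) ^ condEnt P (x k) past := by rw [← hLeq]; exact h2dE
    have hEq : dEnt P e = condEnt P (x k) past :=
      le_antisymm ((Real.rpow_le_rpow_left_iff one_lt_two).mp h1) hcle
    have hM0 : mutInfo P e past = 0 := by rw [key1] at hEq; linarith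
    have h2 : (2:ℝ) ^ Real.logb 2 (suppLen P e) ≤ (2:ℝ) ^ dEnt P e := by
      rw [Real.rpow_logb (by norm_num) (by norm_num) hLpos, hLeq, hEq]
    have hEnt : dEnt P e = Real.logb 2 (suppLen P e) :=
      le_antisymm hle ((Real.rpow_le_rpow_left_iff one_lt_two).mp h2)
    exact ⟨hiff.mp hEnt, hM0⟩
  · rintro ⟨hU, hM0⟩
    have hEnt : dEnt P e = Real.logb 2 (suppLen P e) := hiff.mpr hU
    have hc : condEnt P (x k) past = Real.logb 2 (suppLen P e) := by
      rw [key1, hM0, sub_zero, hEnt]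
    rw [hc, Real.rpow_logb (by norm_num) (by norm_num) hLpos]
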